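/- Möbius transform identity for one-parameter transfer-matrix groups (the computation establishing equation (E.6) used in Lemma E.4 and Corollary E.5): Let \alpha, \beta, \gamma \in \mathbb{C} with \alpha \ne 0, set X := [[\beta, \alpha], [\gamma, -\beta]] and let \widetilde{T}(\ell) := \exp(\ell X) (matrix exponential) with entries \widetilde{t}_{ij}(\ell). Let \dot{T} = [[\hat{a}, \hat{b}], [\hat{c}, \hat{d}]] be a complex 2\times 2 matrix with determinant 1, and let m \in \mathbb{C}. Define f(\ell) := \widetilde{t}_{22}(\ell)(\hat{d} - \hat{b} m) + \widetilde{t}_{12}(\ell)(\hat{c} - \hat{a} m). Then f is differentiable in \ell, and for every \ell \in \mathbb{R} with f(\ell) \ne 0, writing A := \widetilde{T}(\ell)^{-1} \cdot \dot{T}^{-1} with entries A_{ij}, one has A_{11} + A_{12} m = f(\ell) and (A_{21} + A_{22} m)/(A_{11} + A_{12} m) = -f'(\ell)/(\alpha f(\ell)) - \beta/\alpha. -/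

import Mathlib

open NormedSpace Matrix
open scoped Matrix

lemma exp_entry_hasDerivAt (X : Matrix (Fin 2) (Fin 2) ℂ) (ℓ : ℝ) (i j : Fin 2) :
    HasDerivAt (fun t : ℝ => exp ((t : ℂ) • X) i j)
      ((X * exp ((ℓ : ℂ) • X)) i j) ℓ := by
  letI : SeminormedRing (Matrix (Fin 2) (Fin 2) ℂ) := Matrix.linftyOpSemiNormedRing
  letI : NormedRing (Matrix (Fin 2) (Fin 2) ℂ) := Matrix.linftyOpNormedRing
  letI : NormedAlgebra ℂ (Matrix (Fin 2) (Fin 2) ℂ) := Matrix.linftyOpNormedAlgebra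
  have h1 : HasDerivAt (fun z : ℂ => exp (z • X)) (X * exp ((ℓ : ℂ) • X)) (ℓ : ℂ) :=
    hasDerivAt_exp_smul_const' X (ℓ : ℂ)
  have hb : ∀ M : Matrix (Fin 2) (Fin 2) ℂ, ‖M i j‖ ≤ 1 * ‖M‖ := by
    intro M
    rw [one_mul]
    have h2 : ‖M i j‖₊ ≤ ‖M‖₊ := by
      rw [Matrix.linfty_opNNNorm_def]
      calc ‖M i j‖₊ ≤ ∑ k, ‖M i k‖₊ :=
            Finset.single_le_sum (f := fun k => ‖M i k‖₊) (fun _ _ => zero_le)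
              (Finset.mem_univ j)
        _ ≤ _ := Finset.le_sup (f := fun i => ∑ k, ‖M i k‖₊) (Finset.mem_univ i)
    exact h2
  let L : Matrix (Fin 2) (Fin 2) ℂ →L[ℂ] ℂ :=
    LinearMap.mkContinuous
      { toFun := fun M => M i j
        map_add' := fun _ _ => rfl
        map_smul' := fun _ _ => rfl } 1 hb
  have h2 := L.hasFDerivAt.comp_hasDerivAt (ℓ : ℂ) h1
  have h3 : HasDerivAt (fun z : ℂ => exp (z • X) i j)
      ((X * exp ((ℓ : ℂ) • X)) i j) (ℓ : ℂ) := h2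
  exact h3.comp_ofReal

lemma exp_comm_self (X : Matrix (Fin 2) (Fin 2) ℂ) (z : ℂ) :
    X * exp (z • X) = exp (z • X) * X := by
  letI : SeminormedRing (Matrix (Fin 2) (Fin 2) ℂ) := Matrix.linftyOpSemiNormedRing
  letI : NormedRing (Matrix (Fin 2) (Fin 2) ℂ) := Matrix.linftyOpNormedRing
  letI : NormedAlgebra ℂ (Matrix (Fin 2) (Fin 2) ℂ) := Matrix.linftyOpNormedAlgebra
  exact ((hasDerivAt_exp_smul_const' X z).unique (hasDerivAt_exp_smul_const X z))

-- inverse of exp of traceless matrix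
lemma exp_inv_entries (β α γ : ℂ) (z : ℂ) :
    (exp (z • (!![β, α; γ, -β] : Matrix (Fin 2) (Fin 2) ℂ)))⁻¹ =
      !![exp (z • (!![β, α; γ, -β] : Matrix (Fin 2) (Fin 2) ℂ)) 1 1,
          -(exp (z • (!![β, α; γ, -β] : Matrix (Fin 2) (Fin 2) ℂ)) 0 1);
        -(exp (z • (!![β, α; γ, -β] : Matrix (Fin 2) (Fin 2) ℂ)) 1 0),
          exp (z • (!![β, α; γ, -β] : Matrix (Fin 2) (Fin 2) ℂ)) 0 0] := by
  set X : Matrix (Fin 2) (Fin 2) ℂ := !![β, α; γ, -β] with hX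
  set J : Matrix (Fin 2) (Fin 2) ℂ := !![0, -1; 1, 0] with hJ
  have hJu : IsUnit J := by
    rw [Matrix.isUnit_iff_isUnit_det]
    simp [hJ, Matrix.det_fin_two_of]
  have hJinv : J⁻¹ = !![0, 1; -1, 0] := by
    apply Matrix.inv_eq_right_inv
    simp [hJ, Matrix.mul_fin_two, Matrix.one_fin_two]
  have hconj : -(z • X) = J * (z • X)ᵀ * J⁻¹ := by
    rw [hJinv, hX, hJ]
    ext i j
    fin_cases i <;> fin_cases j <;>
      simp [Matrix.mul_apply, Fin.sum_univ_two, Matrix.transpose_apply, Matrix.vecHead, Matrix.vecTail, Matrix.vecMul, dotProduct] <;> ring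
  rw [← Matrix.exp_neg (z • X), hconj, Matrix.exp_conj _ _ hJu, Matrix.exp_transpose]
  set E := exp (z • X) with hE
  rw [hJinv, hJ, Matrix.eta_fin_two E]
  ext i j
  fin_cases i <;> fin_cases j <;>
    simp [Matrix.mul_apply, Fin.sum_univ_two, Matrix.transpose_apply, Matrix.vecHead, Matrix.vecTail, Matrix.vecMul, dotProduct] <;> ring


/-- Möbius transform identity for one-parameter transfer-matrix groups (the computation
establishing equation (E.6), used in Lemma E.4 and Corollary E.5): with
`X = [[β, α], [γ, -β]]`, `T̃(ℓ) = exp(ℓX)`, a fixed `T̂ ∈ SL₂(ℂ)` and `m ∈ ℂ`, set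
`f(ℓ) = t̃₂₂(ℓ)(d̂ - b̂ m) + t̃₁₂(ℓ)(ĉ - â m)`.  Then `f` is differentiable, and whenever
`f(ℓ) ≠ 0`, with `A = T̃(ℓ)⁻¹ T̂⁻¹` one has `A₁₁ + A₁₂ m = f(ℓ)` and
`(A₂₁ + A₂₂ m)/(A₁₁ + A₁₂ m) = -f'(ℓ)/(α f(ℓ)) - β/α`. -/
theorem moebius_log_derivative_identity
    (α β γ : ℂ) (hα : α ≠ 0)
    (X : Matrix (Fin 2) (Fin 2) ℂ) (hX : X = !![β, α; γ, -β])
    (That : Matrix (Fin 2) (Fin 2) ℂ) (hThat : That.det = 1) (m : ℂ)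
    (f : ℝ → ℂ)
    (hf : ∀ ℓ : ℝ, f ℓ =
      (NormedSpace.exp ((ℓ : ℂ) • X)) 1 1 * (That 1 1 - That 0 1 * m) +
        (NormedSpace.exp ((ℓ : ℂ) • X)) 0 1 * (That 1 0 - That 0 0 * m)) :
    Differentiable ℝ f ∧
    ∀ ℓ : ℝ, f ℓ ≠ 0 →
      ((NormedSpace.exp ((ℓ : ℂ) • X))⁻¹ * That⁻¹) 0 0 +
          ((NormedSpace.exp ((ℓ : ℂ) • X))⁻¹ * That⁻¹) 0 1 * m = f ℓ ∧
      (((NormedSpace.exp ((ℓ : ℂ) • X))⁻¹ * That⁻¹) 1 0 +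
          ((NormedSpace.exp ((ℓ : ℂ) • X))⁻¹ * That⁻¹) 1 1 * m) /
        (((NormedSpace.exp ((ℓ : ℂ) • X))⁻¹ * That⁻¹) 0 0 +
          ((NormedSpace.exp ((ℓ : ℂ) • X))⁻¹ * That⁻¹) 0 1 * m) =
        -(deriv f ℓ) / (α * f ℓ) - β / α := by
  set u : ℂ := That 1 1 - That 0 1 * m with hu
  set v : ℂ := That 1 0 - That 0 0 * m with hv
  -- derivative of f
  have hfe : f = fun t : ℝ => exp ((t : ℂ) • X) 1 1 * u + exp ((t : ℂ) • X) 0 1 * v :=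
    funext hf
  have hd : ∀ ℓ : ℝ, HasDerivAt f
      ((X * exp ((ℓ : ℂ) • X)) 1 1 * u + (X * exp ((ℓ : ℂ) • X)) 0 1 * v) ℓ := by
    intro ℓ
    rw [hfe]
    exact ((exp_entry_hasDerivAt X ℓ 1 1).mul_const u).add
      ((exp_entry_hasDerivAt X ℓ 0 1).mul_const v)
  refine ⟨fun ℓ => (hd ℓ).differentiableAt, fun ℓ hfl => ?_⟩
  set E : Matrix (Fin 2) (Fin 2) ℂ := exp ((ℓ : ℂ) • X) with hE
  -- inverse of That
  have hTinv : That⁻¹ = !![That 1 1, -(That 0 1); -(That 1 0), That 0 0] := by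
    rw [Matrix.inv_def, hThat, Matrix.adjugate_fin_two]
    simp
  -- inverse of E
  have hEinv : E⁻¹ = !![E 1 1, -(E 0 1); -(E 1 0), E 0 0] := by
    rw [hE, hX]
    exact exp_inv_entries β α γ (ℓ : ℂ)
  have hA : E⁻¹ * That⁻¹ =
      !![E 1 1 * That 1 1 + -(E 0 1) * -(That 1 0),
          E 1 1 * -(That 0 1) + -(E 0 1) * That 0 0;
        -(E 1 0) * That 1 1 + E 0 0 * -(That 1 0),
          -(E 1 0) * -(That 0 1) + E 0 0 * That 0 0] := by
    rw [hEinv, hTinv, Matrix.mul_fin_two]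
  -- commutation relations
  have hc : X * E = E * X := exp_comm_self X (ℓ : ℂ)
  have h00 : β * E 0 0 + α * E 1 0 = E 0 0 * β + E 0 1 * γ := by
    have := congrFun (congrFun hc 0) 0
    simpa [Matrix.mul_apply, Fin.sum_univ_two, hX] using this
  have h01 : β * E 0 1 + α * E 1 1 = E 0 0 * α + E 0 1 * -β := by
    have := congrFun (congrFun hc 0) 1
    simpa [Matrix.mul_apply, Fin.sum_univ_two, hX] using this
  -- entries of X * E
  have hXE11 : (X * E) 1 1 = γ * E 0 1 + -β * E 1 1 := by
    simp [Matrix.mul_apply, Fin.sum_univ_two, hX]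
  have hXE01 : (X * E) 0 1 = β * E 0 1 + α * E 1 1 := by
    simp [Matrix.mul_apply, Fin.sum_univ_two, hX]
  have hderiv : deriv f ℓ = (γ * E 0 1 + -β * E 1 1) * u + (β * E 0 1 + α * E 1 1) * v := by
    rw [(hd ℓ).deriv, ← hE, hXE11, hXE01]
  have rel1 : α * E 1 0 = γ * E 0 1 := by linear_combination h00
  have rel2 : α * E 0 0 = 2 * β * E 0 1 + α * E 1 1 := by linear_combination (-1 : ℂ) * h01
  have hg1 : (E⁻¹ * That⁻¹) 0 0 + (E⁻¹ * That⁻¹) 0 1 * m = f ℓ := by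
    rw [hA, hf ℓ, ← hE]
    simp [hu, hv]
    ring
  have hN : (E⁻¹ * That⁻¹) 1 0 + (E⁻¹ * That⁻¹) 1 1 * m = -(E 1 0 * u + E 0 0 * v) := by
    rw [hA]
    simp [hu, hv]
    ring
  have hfl' : E 1 1 * u + E 0 1 * v ≠ 0 := by
    rw [hf ℓ, ← hE] at hfl; exact hfl
  refine ⟨hg1, ?_⟩
  rw [hg1, hN, hderiv, hf ℓ, ← hE]
  rw [div_sub_div _ _ (mul_ne_zero hα hfl') hα,
    div_eq_div_iff hfl' (mul_ne_zero (mul_ne_zero hα hfl') hα)]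
  linear_combination (-(α * (E 1 1 * u + E 0 1 * v) * u)) * rel1 +
    (-(α * (E 1 1 * u + E 0 1 * v) * v)) * rel2
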